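/- Let n, m ≥ 1, 0 < r < R, let v ∈ {−r/2, r/2}ⁿ be a vertex of the cube Q_r = (−r/2, r/2)ⁿ, and set q := ((R+r)/(2r)) v + (−(R−r)/4, (R−r)/4)ⁿ. Let A: ℝⁿ → ℝᵐ be an affine map with |A(v)| = sup_{x ∈ [−r/2, r/2]ⁿ} |A(x)|. Then |A(y)| ≥ |A(v)| for every y ∈ q. -/

import Mathlib

open Set

/-- Let `0 < r < R`, let `v ∈ {−r/2, r/2}ⁿ` be a vertex of `Q_r = (−r/2, r/2)ⁿ` and
`q := ((R+r)/(2r)) v + (−(R−r)/4, (R−r)/4)ⁿ`. If `A : ℝⁿ → ℝᵐ` is affine and `|A(v)|` is the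
maximum of `|A|` over the closed cube `[−r/2, r/2]ⁿ`, then `|A(y)| ≥ |A(v)|` for every `y ∈ q`. -/
theorem stmt_3 (n m : ℕ) (hn : 1 ≤ n) (hm : 1 ≤ m) (r R : ℝ) (hr : 0 < r) (hrR : r < R)
    (v : EuclideanSpace ℝ (Fin n)) (hv : ∀ i, v i = r / 2 ∨ v i = -(r / 2))
    (A : EuclideanSpace ℝ (Fin n) →ᵃ[ℝ] EuclideanSpace ℝ (Fin m))
    (hA : IsMaxOn (fun x => ‖A x‖) {x : EuclideanSpace ℝ (Fin n) | ∀ i, |x i| ≤ r / 2} v) :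
    ∀ y : EuclideanSpace ℝ (Fin n),
      (∀ i, y i - ((R + r) / (2 * r)) * v i ∈ Set.Ioo (-((R - r) / 4)) ((R - r) / 4)) →
      ‖A v‖ ≤ ‖A y‖ := by
  intro y hy
  have hRr : (0:ℝ) < R + r := by linarith
  have hRr' : (0:ℝ) < R - r := by linarith
  set t : ℝ := 2 * r / (R + r) with ht
  have ht0 : 0 < t := by positivity
  have ht1 : t < 1 := by
    rw [ht, div_lt_one hRr]; linarith
  set x : EuclideanSpace ℝ (Fin n) :=
    WithLp.toLp 2 (fun i => -(2 * r) * (y i - ((R + r) / (2 * r)) * v i) / (R - r)) with hx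
  have hxcube : x ∈ {x : EuclideanSpace ℝ (Fin n) | ∀ i, |x i| ≤ r / 2} := by
    intro i
    have h := hy i
    have h1 : |y i - ((R + r) / (2 * r)) * v i| ≤ (R - r) / 4 := by
      rw [abs_le]
      exact ⟨h.1.le, h.2.le⟩
    have : |x i| = 2 * r * |y i - ((R + r) / (2 * r)) * v i| / (R - r) := by
      rw [hx]
      simp only [PiLp.toLp_apply]
      rw [abs_div, abs_mul, abs_neg, abs_of_pos (by positivity : (0:ℝ) < 2 * r),
        abs_of_pos hRr']
    rw [this]
    rw [div_le_iff₀ hRr']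
    nlinarith [abs_nonneg (y i - ((R + r) / (2 * r)) * v i)]
  have hv' : AffineMap.lineMap x y t = v := by
    rw [AffineMap.lineMap_apply_module]
    ext i
    simp only [PiLp.add_apply, PiLp.smul_apply, smul_eq_mul, hx, ht, PiLp.toLp_apply]
    field_simp
    ring
  have hAv : A v = (1 - t) • A x + t • A y := by
    rw [← hv', AffineMap.apply_lineMap, AffineMap.lineMap_apply_module]
  have h1 : ‖A v‖ ≤ (1 - t) * ‖A x‖ + t * ‖A y‖ := by
    rw [hAv]
    refine (norm_add_le _ _).trans ?_
    rw [norm_smul, norm_smul, Real.norm_eq_abs, Real.norm_eq_abs,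
      abs_of_nonneg (by linarith : (0:ℝ) ≤ 1 - t), abs_of_pos ht0]
  have h2 : ‖A x‖ ≤ ‖A v‖ := hA hxcube
  nlinarith [mul_le_mul_of_nonneg_left h2 (by linarith : (0:ℝ) ≤ 1 - t)]
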